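/- Let p, q ≥ 1 and N ≤ p + q − 2. Then for any complex matrices B_1, …, B_N ∈ ℂ^{p×q} there exist nonzero vectors x ∈ ℂ^p and y ∈ ℂ^q such that xᵀB_jy = 0 for all 1 ≤ j ≤ N. That is, no complex bilinear form of size (p, q, N) with N ≤ p + q − 2 is nonsingular. -/

import Mathlib

open Matrix MvPolynomial Finsupp

noncomputable section
namespace Stmt8Aux

/-! ### Setup -/

variable {p q N : ℕ}

abbrev σt (p q : ℕ) := Fin p ⊕ Fin q

def wt (p q : ℕ) : σt p q → ℕ × ℕ := Sum.elim (fun _ => (1,0)) (fun _ => (0,1))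

lemma weight_eq (e : σt p q →₀ ℕ) :
    Finsupp.weight (wt p q) e = (∑ i, e (Sum.inl i), ∑ l, e (Sum.inr l)) := by
  rw [Finsupp.weight_apply, Finsupp.sum_fintype]
  rw [Fintype.sum_sum_type]
  simp [wt, Prod.ext_iff, Prod.smul_mk, Prod.fst_sum, Prod.snd_sum]
  exact fun s => zero_smul _ _

def F (B : Fin N → Matrix (Fin p) (Fin q) ℂ) (j : Fin N) : MvPolynomial (σt p q) ℂ :=
  ∑ i, ∑ l, C (B j i l) * X (Sum.inl i) * X (Sum.inr l)

lemma F_hom (B : Fin N → Matrix (Fin p) (Fin q) ℂ) (j : Fin N) :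
    IsWeightedHomogeneous (wt p q) (F B j) (1,1) := by
  apply IsWeightedHomogeneous.sum
  intro i _
  apply IsWeightedHomogeneous.sum
  intro l _
  have h1 : IsWeightedHomogeneous (wt p q) (C (B j i l) : MvPolynomial (σt p q) ℂ) 0 :=
    isWeightedHomogeneous_C _ _
  have h2 := isWeightedHomogeneous_X ℂ (wt p q) (Sum.inl i : σt p q)
  have h3 := isWeightedHomogeneous_X ℂ (wt p q) (Sum.inr l : σt p q)
  have := (h1.mul h2).mul h3
  convert this using 2 <;> simp [wt]

lemma eval_F (B : Fin N → Matrix (Fin p) (Fin q) ℂ) (j : Fin N) (z : σt p q → ℂ) :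
    eval z (F B j) = (z ∘ Sum.inl) ⬝ᵥ (B j) *ᵥ (z ∘ Sum.inr) := by
  simp only [F, map_sum, _root_.map_mul, eval_C, eval_X, dotProduct, mulVec, Function.comp]
  refine Finset.sum_congr rfl fun i _ => ?_
  rw [Finset.mul_sum]
  refine Finset.sum_congr rfl fun l _ => ?_
  ring

def Ib (B : Fin N → Matrix (Fin p) (Fin q) ℂ) : Ideal (MvPolynomial (σt p q) ℂ) :=
  Ideal.span (Set.range (F B))

/-! ### Nullstellensatz -/

lemma exists_pow_XY_mem (B : Fin N → Matrix (Fin p) (Fin q) ℂ)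
    (hcon : ∀ x y, (∀ j, x ⬝ᵥ B j *ᵥ y = 0) → x = 0 ∨ y = 0) :
    ∃ m : ℕ, 1 ≤ m ∧ ∀ (i : Fin p) (l : Fin q),
      (X (Sum.inl i) * X (Sum.inr l) : MvPolynomial (σt p q) ℂ) ^ m ∈ Ib B := by
  have hrad : ∀ (i : Fin p) (l : Fin q),
      (X (Sum.inl i) * X (Sum.inr l) : MvPolynomial (σt p q) ℂ) ∈ (Ib B).radical := by
    intro i l
    rw [← vanishingIdeal_zeroLocus_eq_radical (K := ℂ), mem_vanishingIdeal_iff]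
    intro z hz
    have hF : ∀ j, eval z (F B j) = 0 := fun j =>
      (mem_zeroLocus_iff.mp hz) _ (Ideal.subset_span ⟨j, rfl⟩)
    have := hcon (z ∘ Sum.inl) (z ∘ Sum.inr) (fun j => by rw [← eval_F B j z]; exact hF j)
    rcases this with h | h
    · simp only [_root_.map_mul, eval_X, aeval_X]
      rw [show z (Sum.inl i) = 0 from congrFun h i, zero_mul]
    · simp only [_root_.map_mul, eval_X, aeval_X]
      rw [show z (Sum.inr l) = 0 from congrFun h l, mul_zero]
  choose mf hmf using fun i l => Ideal.mem_radical_iff.mp (hrad i l)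
  refine ⟨1 + ∑ i, ∑ l, mf i l, Nat.le_add_right 1 _, fun i l => ?_⟩
  · exact Ideal.pow_mem_of_pow_mem (I := Ib B) (hmf i l) (by
      calc mf i l ≤ ∑ l, mf i l :=
            Finset.single_le_sum (fun _ _ => Nat.zero_le _) (Finset.mem_univ _)
      _ ≤ 1 + ∑ i, ∑ l, mf i l := le_add_of_nonneg_of_le (Nat.zero_le _)
          (Finset.single_le_sum (f := fun i => ∑ l, mf i l) (fun _ _ => Nat.zero_le _)
            (Finset.mem_univ _)))

/-! ### Monomials of large balanced bidegree lie in the ideal -/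

lemma monomial_mem (B : Fin N → Matrix (Fin p) (Fin q) ℂ)
    (hp : 1 ≤ p) (hq : 1 ≤ q) (m : ℕ) (hm : 1 ≤ m)
    (hXY : ∀ (i : Fin p) (l : Fin q),
      (X (Sum.inl i) * X (Sum.inr l) : MvPolynomial (σt p q) ℂ) ^ m ∈ Ib B)
    (d : ℕ) (hd : m * (p + q) ≤ d) (e : σt p q →₀ ℕ)
    (he : Finsupp.weight (wt p q) e = (d, d)) :
    (monomial e 1 : MvPolynomial (σt p q) ℂ) ∈ Ib B := by
  rw [weight_eq, Prod.mk.injEq] at he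
  obtain ⟨m', rfl⟩ : ∃ m', m = m' + 1 := ⟨m - 1, by omega⟩
  have hi : ∃ i : Fin p, m' + 1 ≤ e (Sum.inl i) := by
    by_contra h
    push_neg at h
    have : ∑ i, e (Sum.inl i) ≤ ∑ _i : Fin p, m' :=
      Finset.sum_le_sum (fun i _ => by have := h i; omega)
    rw [Finset.sum_const, Finset.card_univ, Fintype.card_fin, smul_eq_mul] at this
    rw [he.1] at this
    nlinarith
  have hl : ∃ l : Fin q, m' + 1 ≤ e (Sum.inr l) := by
    by_contra h
    push_neg at h
    have : ∑ l, e (Sum.inr l) ≤ ∑ _l : Fin q, m' :=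
      Finset.sum_le_sum (fun l _ => by have := h l; omega)
    rw [Finset.sum_const, Finset.card_univ, Fintype.card_fin, smul_eq_mul] at this
    rw [he.2] at this
    nlinarith
  obtain ⟨i, hi⟩ := hi
  obtain ⟨l, hl⟩ := hl
  set m := m' + 1
  set s : σt p q →₀ ℕ := Finsupp.single (Sum.inl i) m + Finsupp.single (Sum.inr l) m with hs
  have hse : e - s + s = e := by
    ext t
    simp only [Finsupp.coe_add, Finsupp.coe_tsub, Pi.add_apply, Pi.sub_apply, hs,
      Finsupp.single_apply]
    rcases t with a | b <;> simp only [Sum.inl.injEq, Sum.inr.injEq, reduceCtorEq, if_false] <;>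
      split_ifs with h <;> first | (subst h; omega) | omega
  have hXYm : ((X (Sum.inl i) * X (Sum.inr l) : MvPolynomial (σt p q) ℂ)) ^ m
      = monomial s 1 := by
    rw [mul_pow, X_pow_eq_monomial, X_pow_eq_monomial, monomial_mul, one_mul]
  have : (monomial e 1 : MvPolynomial (σt p q) ℂ)
      = monomial (e - s) 1 * (X (Sum.inl i) * X (Sum.inr l)) ^ m := by
    rw [hXYm, monomial_mul, one_mul, hse]
  rw [this]
  exact Ideal.mul_mem_left _ _ (hXY i l)

lemma hom_mem (B : Fin N → Matrix (Fin p) (Fin q) ℂ)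
    (hp : 1 ≤ p) (hq : 1 ≤ q) (m : ℕ) (hm : 1 ≤ m)
    (hXY : ∀ (i : Fin p) (l : Fin q),
      (X (Sum.inl i) * X (Sum.inr l) : MvPolynomial (σt p q) ℂ) ^ m ∈ Ib B)
    (d : ℕ) (hd : m * (p + q) ≤ d) (φ : MvPolynomial (σt p q) ℂ)
    (hφ : IsWeightedHomogeneous (wt p q) φ (d, d)) : φ ∈ Ib B := by
  rw [← support_sum_monomial_coeff φ]
  refine Ideal.sum_mem _ (fun e he => ?_)
  rw [← mul_one (coeff e φ), ← C_mul_monomial]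
  exact Ideal.mul_mem_left _ _
    (monomial_mem B hp hq m hm hXY d hd e (hφ (MvPolynomial.mem_support_iff.mp he)))

/-! ### Graded projection -/

lemma wcomp_mul {σ : Type*} [DecidableEq σ] (w : σ → ℕ × ℕ) (c f : MvPolynomial σ ℂ)
    (n m : ℕ × ℕ) (hf : IsWeightedHomogeneous w f n) :
    weightedHomogeneousComponent w (m + n) (c * f)
      = weightedHomogeneousComponent w m c * f := by
  ext e
  rw [coeff_weightedHomogeneousComponent, coeff_mul, coeff_mul]
  split_ifs with h
  · refine Finset.sum_congr rfl fun x hx => ?_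
    rw [coeff_weightedHomogeneousComponent]
    by_cases hf0 : coeff x.2 f = 0
    · rw [hf0, mul_zero, mul_zero]
    · have hw2 : Finsupp.weight w x.2 = n := hf hf0
      have hxe : x.1 + x.2 = e := Finset.HasAntidiagonal.mem_antidiagonal.mp hx
      have hw1 : Finsupp.weight w x.1 = m := by
        have h' : Finsupp.weight w x.1 + Finsupp.weight w x.2 = m + n := by
          rw [← map_add, hxe, h]
        rw [hw2] at h'
        exact add_right_cancel h'
      rw [if_pos hw1]
  · symm
    refine Finset.sum_eq_zero fun x hx => ?_
    rw [coeff_weightedHomogeneousComponent]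
    by_cases hf0 : coeff x.2 f = 0
    · rw [hf0, mul_zero]
    · rw [if_neg, zero_mul]
      intro hm
      exact h (by rw [← Finset.HasAntidiagonal.mem_antidiagonal.mp hx, map_add, hm, hf hf0])

lemma decomp (B : Fin N → Matrix (Fin p) (Fin q) ℂ) (φ : MvPolynomial (σt p q) ℂ) (d : ℕ)
    (hφI : φ ∈ Ib B) (hφ : IsWeightedHomogeneous (wt p q) φ (d+1, d+1)) :
    ∃ c : Fin N → MvPolynomial (σt p q) ℂ,
      (∀ j, IsWeightedHomogeneous (wt p q) (c j) (d, d)) ∧ φ = ∑ j, c j * F B j := by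
  obtain ⟨c', hc'⟩ := Ideal.mem_span_range_iff_exists_fun.mp hφI
  refine ⟨fun j => weightedHomogeneousComponent (wt p q) (d,d) (c' j),
    fun j => weightedHomogeneousComponent_isWeightedHomogeneous _ _, ?_⟩
  have hdd : ((d,d) : ℕ × ℕ) + (1,1) = (d+1, d+1) := rfl
  calc φ = weightedHomogeneousComponent (wt p q) (d+1,d+1) φ :=
        (IsWeightedHomogeneous.weightedHomogeneousComponent_same hφ).symm
    _ = ∑ j, weightedHomogeneousComponent (wt p q) (d+1,d+1) (c' j * F B j) := by
        rw [← hc', map_sum]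
    _ = ∑ j, weightedHomogeneousComponent (wt p q) (d,d) (c' j) * F B j := by
        refine Finset.sum_congr rfl fun j _ => ?_
        rw [← hdd, wcomp_mul _ _ _ _ _ (F_hom B j)]

/-! ### The spanning sets -/

def Gset (B : Fin N → Matrix (Fin p) (Fin q) ℂ) (D₀ k : ℕ) :
    Set (MvPolynomial (σt p q) ℂ) :=
  {g | ∃ (α : Fin N → ℕ) (u : σt p q →₀ ℕ), (∑ j, α j) = k ∧
    Finsupp.weight (wt p q) u = (D₀, D₀) ∧ g = (∏ j, F B j ^ α j) * monomial u 1}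

lemma span_hom (B : Fin N → Matrix (Fin p) (Fin q) ℂ)
    (hp : 1 ≤ p) (hq : 1 ≤ q) (m : ℕ) (hm : 1 ≤ m)
    (hXY : ∀ (i : Fin p) (l : Fin q),
      (X (Sum.inl i) * X (Sum.inr l) : MvPolynomial (σt p q) ℂ) ^ m ∈ Ib B)
    (k : ℕ) :
    ∀ φ : MvPolynomial (σt p q) ℂ,
      IsWeightedHomogeneous (wt p q) φ (m * (p+q) + k, m * (p+q) + k) →
      φ ∈ Submodule.span ℂ (Gset B (m * (p+q)) k) := by
  set D₀ := m * (p + q) with hD₀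
  induction k with
  | zero =>
    intro φ hφ
    rw [← support_sum_monomial_coeff φ]
    refine Submodule.sum_mem _ (fun e he => ?_)
    have hmono : (monomial e (coeff e φ) : MvPolynomial (σt p q) ℂ)
        = coeff e φ • ((∏ j : Fin N, F B j ^ (0:ℕ)) * monomial e 1) := by
      simp [smul_monomial]
    rw [hmono]
    refine Submodule.smul_mem _ _ (Submodule.subset_span ?_)
    exact ⟨fun _ => 0, e, by simp, hφ (MvPolynomial.mem_support_iff.mp he), rfl⟩
  | succ k ih =>
    intro φ hφ
    have hφI : φ ∈ Ib B :=
      hom_mem B hp hq m hm hXY (D₀ + (k+1)) (Nat.le_add_right _ _) φ hφ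
    have hφ' : IsWeightedHomogeneous (wt p q) φ ((D₀ + k) + 1, (D₀ + k) + 1) := by
      convert hφ using 2 <;> omega
    obtain ⟨c, hc, hφeq⟩ := decomp B φ (D₀ + k) hφI hφ'
    rw [hφeq]
    refine Submodule.sum_mem _ (fun j _ => ?_)
    have hcj : c j ∈ Submodule.span ℂ (Gset B D₀ k) := ih (c j) (hc j)
    refine Submodule.span_induction ?_ ?_ ?_ ?_ hcj
    · rintro g ⟨α, u, hα, hu, rfl⟩
      refine Submodule.subset_span ?_
      refine ⟨fun j' => α j' + if j' = j then 1 else 0, u, ?_, hu, ?_⟩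
      · rw [Finset.sum_add_distrib, hα, Finset.sum_ite_eq' Finset.univ j (fun _ => 1),
          if_pos (Finset.mem_univ _)]
      · have hprod : (∏ j', F B j' ^ (α j' + if j' = j then 1 else 0))
            = (∏ j', F B j' ^ α j') * F B j := by
          simp_rw [pow_add]
          rw [Finset.prod_mul_distrib]
          congr 1
          rw [show (∏ j', F B j' ^ if j' = j then 1 else 0)
              = ∏ j', if j' = j then F B j' else 1 from
            Finset.prod_congr rfl (fun j' _ => by split_ifs <;> simp)]
          rw [Finset.prod_ite_eq' Finset.univ j (fun j' => F B j'), if_pos (Finset.mem_univ _)]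
        rw [hprod]
        ring
    · simp
    · intro a b _ _ ha hb
      rw [add_mul]
      exact Submodule.add_mem _ ha hb
    · intro r a _ ha
      rw [smul_mul_assoc]
      exact Submodule.smul_mem _ _ ha

lemma main (p' q' N' m : ℕ) (hN : N' + 1 ≤ p' + q') (hm : 1 ≤ m)
    (B : Fin (N'+1) → Matrix (Fin (p'+1)) (Fin (q'+1)) ℂ)
    (hXY : ∀ (i : Fin (p'+1)) (l : Fin (q'+1)),
      (X (Sum.inl i) * X (Sum.inr l) : MvPolynomial (σt (p'+1) (q'+1)) ℂ) ^ m ∈ Ib B) :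
    False := by
  let P := p' + 1
  let Q := q' + 1
  have hP : P = p' + 1 := rfl
  have hQ : Q = q' + 1 := rfl
  set D₀ := m * (P + Q) with hD₀
  set Cb := (P+Q)^N' * (D₀+1)^(P+Q) with hCb
  set t := m + Cb with ht
  set d := (P+Q) * t with hd
  have hD₀d : D₀ ≤ d := by
    have hmt : m ≤ t := by omega
    calc D₀ = (P+Q) * m := by rw [hD₀]; ring
      _ ≤ (P+Q) * t := Nat.mul_le_mul_left _ hmt
  set k := d - D₀ with hk
  have hdk : D₀ + k = d := by omega
  -- upper bound: spanning family
  set αof : (Fin N' → Fin (k+1)) → (Fin (N'+1) → ℕ) :=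
    fun v => Fin.snoc (fun j' => (v j' : ℕ)) (k - ∑ j', (v j' : ℕ)) with hαof
  set Gfam : ((Fin N' → Fin (k+1)) × (σt P Q → Fin (D₀+1))) → MvPolynomial (σt P Q) ℂ :=
    fun vu => (∏ j, F B j ^ αof vu.1 j)
      * monomial (Finsupp.equivFunOnFinite.symm (fun s => (vu.2 s : ℕ))) 1 with hGfam
  have hGsub : Gset B D₀ k ⊆ Set.range Gfam := by
    rintro g ⟨α, u, hα, hu, rfl⟩
    have hαle : ∀ j, α j ≤ k := fun j =>
      hα ▸ Finset.single_le_sum (fun _ _ => Nat.zero_le _) (Finset.mem_univ _)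
    rw [weight_eq, Prod.mk.injEq] at hu
    have huleL : ∀ i : Fin P, u (Sum.inl i) ≤ D₀ := fun i =>
      hu.1 ▸ Finset.single_le_sum (f := fun i => u (Sum.inl i))
        (fun _ _ => Nat.zero_le _) (Finset.mem_univ _)
    have huleR : ∀ l : Fin Q, u (Sum.inr l) ≤ D₀ := fun l =>
      hu.2 ▸ Finset.single_le_sum (f := fun l => u (Sum.inr l))
        (fun _ _ => Nat.zero_le _) (Finset.mem_univ _)
    have hule : ∀ s, u s ≤ D₀ := fun s => by
      rcases s with i | l
      · exact huleL i
      · exact huleR l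
    refine ⟨(fun j' => ⟨α j'.castSucc, by have := hαle j'.castSucc; omega⟩,
             fun s => ⟨u s, by have := hule s; omega⟩), ?_⟩
    have hαeq : αof (fun j' => ⟨α j'.castSucc, by have := hαle j'.castSucc; omega⟩) = α := by
      funext j
      refine Fin.lastCases ?_ ?_ j
      · simp only [hαof, Fin.snoc_last]
        have hsum := Fin.sum_univ_castSucc (f := α)
        omega
      · intro j'
        simp [hαof, Fin.snoc_castSucc]
    have humeq : (Finsupp.equivFunOnFinite.symm
        (fun s => (((fun s => (⟨u s, by have := hule s; omega⟩ : Fin (D₀+1))) s : Fin (D₀+1)) : ℕ)))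
        = u := by
      rw [show (fun s => (((fun s => (⟨u s, by have := hule s; omega⟩ : Fin (D₀+1))) s
          : Fin (D₀+1)) : ℕ)) = ⇑u from rfl]
      exact Finsupp.equivFunOnFinite_symm_coe u
    simp only [hGfam, hαeq, humeq, Finsupp.equivFunOnFinite_symm_coe]
  -- the span is finite dimensional of controlled dimension
  set sG : Finset (MvPolynomial (σt P Q) ℂ) := Finset.image Gfam Finset.univ with hsG
  have hrange : Set.range Gfam = (sG : Set _) := by
    rw [hsG, Finset.coe_image, Finset.coe_univ, Set.image_univ]
  set W := Submodule.span ℂ (sG : Set (MvPolynomial (σt P Q) ℂ)) with hW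
  haveI : FiniteDimensional ℂ W := FiniteDimensional.span_of_finite ℂ (Finset.finite_toSet _)
  have hWle : Submodule.span ℂ (Gset B D₀ k) ≤ W :=
    Submodule.span_mono (hrange ▸ hGsub)
  have hfr : Module.finrank ℂ W ≤ (k+1)^N' * (D₀+1)^(P+Q) := by
    refine (finrank_span_finset_le_card sG).trans ?_
    refine (Finset.card_image_le).trans ?_
    rw [Finset.card_univ, Fintype.card_prod, Fintype.card_fun, Fintype.card_fun,
      Fintype.card_fin, Fintype.card_fin, Fintype.card_fin]
    rw [Fintype.card_sum, Fintype.card_fin, Fintype.card_fin]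
  -- lower bound: independent monomials
  let ι := (Fin p' → Fin (t+1)) × (Fin q' → Fin (t+1))
  have hsa : ∀ (r : ℕ) (hr : r ≤ P + Q) (a : Fin r → Fin (t+1)), ∑ i, (a i : ℕ) ≤ d := by
    intro r hr a
    calc ∑ i, (a i : ℕ) ≤ ∑ _i : Fin r, t := Finset.sum_le_sum (fun i _ => Fin.is_le _)
      _ = r * t := by rw [Finset.sum_const, Finset.card_univ, Fintype.card_fin, smul_eq_mul]
      _ ≤ (P+Q) * t := Nat.mul_le_mul_right _ hr
  set expf : ι → (σt P Q → ℕ) := fun ab => Sum.elim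
      (Fin.snoc (fun i => (ab.1 i : ℕ)) (d - ∑ i, (ab.1 i : ℕ)))
      (Fin.snoc (fun l => (ab.2 l : ℕ)) (d - ∑ l, (ab.2 l : ℕ))) with hexpf
  set expo : ι → (σt P Q →₀ ℕ) := fun ab => Finsupp.equivFunOnFinite.symm (expf ab) with hexpo
  have hexpo_apply : ∀ ab s, expo ab s = expf ab s := fun ab s => rfl
  have hwexpo : ∀ ab, Finsupp.weight (wt P Q) (expo ab) = (d, d) := by
    intro ab
    rw [weight_eq, Prod.mk.injEq]
    constructor
    · have h1 : ∑ i : Fin P, expo ab (Sum.inl i)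
          = ∑ i : Fin p', (ab.1 i : ℕ) + (d - ∑ i, (ab.1 i : ℕ)) := by
        rw [Fin.sum_univ_castSucc]
        simp [hexpo_apply, hexpf, Fin.snoc_castSucc, Fin.snoc_last]
      rw [h1]
      have := hsa p' (by omega) ab.1
      omega
    · have h1 : ∑ l : Fin Q, expo ab (Sum.inr l)
          = ∑ l : Fin q', (ab.2 l : ℕ) + (d - ∑ l, (ab.2 l : ℕ)) := by
        rw [Fin.sum_univ_castSucc]
        simp [hexpo_apply, hexpf, Fin.snoc_castSucc, Fin.snoc_last]
      rw [h1]
      have := hsa q' (by omega) ab.2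
      omega
  have hinj : Function.Injective expo := by
    intro ab ab' h
    have h' : expf ab = expf ab' := Finsupp.equivFunOnFinite.symm.injective h
    have ha : ab.1 = ab'.1 := by
      funext i
      have := congrFun h' (Sum.inl i.castSucc)
      simp only [hexpf, Sum.elim_inl, Fin.snoc_castSucc] at this
      exact Fin.ext this
    have hb : ab.2 = ab'.2 := by
      funext l
      have := congrFun h' (Sum.inr l.castSucc)
      simp only [hexpf, Sum.elim_inr, Fin.snoc_castSucc] at this
      exact Fin.ext this
    exact Prod.ext ha hb
  set monos : ι → MvPolynomial (σt P Q) ℂ := fun ab => monomial (expo ab) 1 with hmonos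
  have hli : LinearIndependent ℂ monos := by
    have hb := (MvPolynomial.basisMonomials (σt P Q) ℂ).linearIndependent
    have : monos = (MvPolynomial.basisMonomials (σt P Q) ℂ) ∘ expo := by
      funext ab
      show (monomial (expo ab)) 1 = (⇑(MvPolynomial.basisMonomials (σt P Q) ℂ)) (expo ab)
      rw [MvPolynomial.coe_basisMonomials]
    rw [this]
    exact hb.comp expo hinj
  have hD₀' : D₀ = m * (p' + 1 + (q' + 1)) := rfl
  have hmem : ∀ ab, monos ab ∈ W := by
    intro ab
    refine hWle (span_hom B (by omega) (by omega) m hm hXY k (monos ab) ?_)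
    refine isWeightedHomogeneous_monomial _ _ _ ?_
    rw [hwexpo ab]
    rw [Prod.mk.injEq]
    constructor <;> omega
  have hcard : Fintype.card ι ≤ Module.finrank ℂ W := by
    set monos' : ι → W := fun ab => ⟨monos ab, hmem ab⟩ with hmonos'
    have hli' : LinearIndependent ℂ monos' := by
      apply LinearIndependent.of_comp W.subtype
      exact hli
    exact hli'.fintype_card_le_finrank
  -- final arithmetic
  have hcardι : Fintype.card ι = (t+1)^(p'+q') := by
    show Fintype.card ((Fin p' → Fin (t+1)) × (Fin q' → Fin (t+1))) = _
    rw [Fintype.card_prod, Fintype.card_fun, Fintype.card_fun]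
    simp [← pow_add]
  have hfinal : (t+1)^(p'+q') ≤ (k+1)^N' * (D₀+1)^(P+Q) := by
    rw [← hcardι]
    exact hcard.trans hfr
  have hk1 : k + 1 ≤ (P+Q) * (t+1) := by
    have e1 : (P+Q) * (t+1) = (P+Q)*t + (P+Q) := by ring
    omega
  have step1 : (k+1)^N' ≤ (P+Q)^N' * (t+1)^N' := by
    rw [← mul_pow]
    exact Nat.pow_le_pow_left hk1 _
  have step2 : (t+1)^(p'+q') ≤ Cb * (t+1)^N' := by
    calc (t+1)^(p'+q') ≤ (k+1)^N' * (D₀+1)^(P+Q) := hfinal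
      _ ≤ ((P+Q)^N' * (t+1)^N') * (D₀+1)^(P+Q) := Nat.mul_le_mul_right _ step1
      _ = Cb * (t+1)^N' := by rw [hCb]; ring
  have step3 : (t+1)^N' * (t+1) ≤ (t+1)^N' * Cb := by
    calc (t+1)^N' * (t+1) = (t+1)^(N'+1) := by rw [pow_succ]
      _ ≤ (t+1)^(p'+q') := Nat.pow_le_pow_right (by omega) hN
      _ ≤ Cb * (t+1)^N' := step2
      _ = (t+1)^N' * Cb := by ring
  have hfin : t + 1 ≤ Cb := Nat.le_of_mul_le_mul_left step3 (Nat.pow_pos (by omega))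
  omega

end Stmt8Aux

open Matrix

theorem stmt_8 (p q N : ℕ) (hp : 1 ≤ p) (hq : 1 ≤ q) (hN : N ≤ p + q - 2)
    (B : Fin N → Matrix (Fin p) (Fin q) ℂ) :
    ∃ x : Fin p → ℂ, x ≠ 0 ∧ ∃ y : Fin q → ℂ, y ≠ 0 ∧
      ∀ j, x ⬝ᵥ (B j) *ᵥ y = 0 := by
  by_cases hN0 : N = 0
  · subst hN0
    refine ⟨fun _ => 1, ?_, fun _ => 1, ?_, fun j => j.elim0⟩
    · intro h; exact one_ne_zero (congrFun h ⟨0, hp⟩)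
    · intro h; exact one_ne_zero (congrFun h ⟨0, hq⟩)
  by_contra hcon'
  push_neg at hcon'
  have hcon : ∀ x y, (∀ j, x ⬝ᵥ B j *ᵥ y = 0) → x = 0 ∨ y = 0 := by
    intro x y hxy
    by_contra hc
    push_neg at hc
    obtain ⟨j, hj⟩ := hcon' x hc.1 y hc.2
    exact hj (hxy j)
  obtain ⟨m, hm, hXY⟩ := Stmt8Aux.exists_pow_XY_mem B hcon
  obtain ⟨p', rfl⟩ : ∃ p', p = p' + 1 := ⟨p - 1, by omega⟩
  obtain ⟨q', rfl⟩ : ∃ q', q = q' + 1 := ⟨q - 1, by omega⟩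
  obtain ⟨N', rfl⟩ : ∃ N', N = N' + 1 := ⟨N - 1, by omega⟩
  exact Stmt8Aux.main p' q' N' m (by omega) hm B hXY
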